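/- For any integer n ≥ 4 with n ≡ 0 (mod 4), the equidistant dimension of the prism graph C_n □ K_2 equals n. -/

import Mathlib

open SimpleGraph

/-- A distance-equalizer set: any two vertices outside `D` are equidistant
from some vertex of `D`. -/
def IsDistEqSet {V : Type*} (G : SimpleGraph V) (D : Set V) : Prop :=
  ∀ x ∉ D, ∀ y ∉ D, ∃ w ∈ D, G.dist x w = G.dist y w

/-- The equidistant dimension: minimum cardinality of a distance-equalizer set. -/
noncomputable def eqdim {V : Type*} [Fintype V] (G : SimpleGraph V) : ℕ :=
  sInf {k | ∃ D : Finset V, IsDistEqSet G (D : Set V) ∧ D.card = k}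

namespace EqdimPrism

variable {n : ℕ}

/-- circular distance on `Fin n` -/
def cd (i j : Fin n) : ℕ := min ((j - i).val) ((i - j).val)

lemma sub_val (hn : 0 < n) (i j : Fin n) :
    (i - j).val = if j.val ≤ i.val then i.val - j.val else i.val + n - j.val := by
  rw [Fin.sub_def]
  simp only []
  have hi := i.isLt; have hj := j.isLt
  rcases Nat.lt_or_ge (n - j.val + i.val) n with h | h
  · rw [Nat.mod_eq_of_lt h]; split <;> omega
  · rw [Nat.mod_eq_sub_mod h, Nat.mod_eq_of_lt (by omega)]; split <;> omega

lemma cd_val (hn : 0 < n) (i j : Fin n) :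
    cd i j = min (if i.val ≤ j.val then j.val - i.val else j.val + n - i.val)
      (if j.val ≤ i.val then i.val - j.val else i.val + n - j.val) := by
  rw [cd, sub_val hn, sub_val hn]

lemma cd_val2 (hn0 : 0 < n) (i j : Fin n) :
    cd i j = min ((i.val - j.val) + (j.val - i.val))
      (n - ((i.val - j.val) + (j.val - i.val))) := by
  have hi := i.isLt; have hj := j.isLt
  rw [cd_val hn0]
  split_ifs <;> omega

lemma cd_self (hn : 0 < n) (i : Fin n) : cd i i = 0 := by
  rw [cd_val hn]; split_ifs <;> omega

lemma cd_eq_zero (hn : 0 < n) {i j : Fin n} (h : cd i j = 0) : i = j := by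
  rw [cd_val hn] at h
  have hi := i.isLt; have hj := j.isLt
  refine Fin.ext ?_
  split_ifs at h <;> omega

lemma cycle_step (hn : 4 ≤ n) (K : ℕ) (hK : K < n) (i j : Fin n)
    (hadj : (i - (⟨K, hK⟩ : Fin n)).val = 1 ∨ ((⟨K, hK⟩ : Fin n) - i).val = 1)
    (hcd : cd (⟨K, hK⟩ : Fin n) j + 1 = cd i j) (m : ℕ) (hm : cd i j = m + 1) :
    ∃ i' : Fin n, (cycleGraph n).Adj i i' ∧ cd i' j = m := by
  refine ⟨⟨K, hK⟩, cycleGraph_adj'.mpr hadj, by omega⟩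

/-- a walk in the cycle realizing the circular distance -/
lemma exists_cycle_walk (hn : 4 ≤ n) (k : ℕ) :
    ∀ i j : Fin n, cd i j = k → ∃ p : (cycleGraph n).Walk i j, p.length = k := by
  have hn0 : 0 < n := by omega
  induction k with
  | zero =>
    intro i j h
    obtain rfl := cd_eq_zero hn0 h
    exact ⟨SimpleGraph.Walk.nil, rfl⟩
  | succ k ih =>
    intro i j h
    have hi := i.isLt; have hj := j.isLt
    have key : ∃ i' : Fin n, (cycleGraph n).Adj i i' ∧ cd i' j = k := by
      by_cases hc : (j - i).val ≤ (i - j).val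
      · rcases Nat.lt_or_ge (i.val + 1) n with h1 | h1
        · refine cycle_step hn (i.val + 1) h1 i j (Or.inr ?_) ?_ k h <;>
          · simp only [cd_val hn0, sub_val hn0, Fin.val_mk] at h hc ⊢
            split_ifs at h hc ⊢ <;> omega
        · refine cycle_step hn 0 (by omega) i j (Or.inr ?_) ?_ k h <;>
          · simp only [cd_val hn0, sub_val hn0, Fin.val_mk] at h hc ⊢
            split_ifs at h hc ⊢ <;> omega
      · rcases eq_or_ne i.val 0 with h1 | h1
        · refine cycle_step hn (n - 1) (by omega) i j (Or.inl ?_) ?_ k h <;>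
          · simp only [cd_val hn0, sub_val hn0, Fin.val_mk] at h hc ⊢
            split_ifs at h hc ⊢ <;> omega
        · refine cycle_step hn (i.val - 1) (by omega) i j (Or.inl ?_) ?_ k h <;>
          · simp only [cd_val hn0, sub_val hn0, Fin.val_mk] at h hc ⊢
            split_ifs at h hc ⊢ <;> omega
    obtain ⟨i', hadj, hcd⟩ := key
    obtain ⟨p, hp⟩ := ih i' j hcd
    exact ⟨SimpleGraph.Walk.cons hadj p, by simp [hp]⟩

lemma cd_step (hn : 4 ≤ n) {u v : Fin n} (h : (cycleGraph n).Adj u v) (j : Fin n) :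
    cd u j ≤ cd v j + 1 := by
  have hn0 : 0 < n := by omega
  have hu := u.isLt; have hv := v.isLt; have hj := j.isLt
  rcases cycleGraph_adj'.mp h with h1 | h1 <;>
  · rw [sub_val hn0] at h1
    rw [cd_val hn0, cd_val hn0]
    split_ifs at * <;> omega

lemma pd_le (hn : 4 ≤ n) {x y : Fin n × Fin 2}
    (p : (cycleGraph n □ (⊤ : SimpleGraph (Fin 2))).Walk x y) :
    cd x.1 y.1 + (if x.2 = y.2 then 0 else 1) ≤ p.length := by
  induction p with
  | nil => simp [cd_self (show 0 < n by omega)]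
  | @cons u v y h q ih =>
    rw [SimpleGraph.Walk.length_cons]
    rcases SimpleGraph.boxProd_adj.mp h with ⟨ha, he⟩ | ⟨ha, he⟩
    · have h1 := cd_step hn ha y.1
      rw [he]
      omega
    · rw [he]
      have h2 : (if u.2 = y.2 then (0:ℕ) else 1) ≤ (if v.2 = y.2 then (0:ℕ) else 1) + 1 := by
        split_ifs <;> omega
      omega

lemma prism_conn (hn : 4 ≤ n) : (cycleGraph n □ (⊤ : SimpleGraph (Fin 2))).Connected := by
  have h1 : (cycleGraph n).Connected := by
    obtain ⟨m, rfl⟩ : ∃ m, n = m + 1 := ⟨n - 1, by omega⟩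
    exact cycleGraph_connected
  exact h1.boxProd connected_top

lemma prism_dist (hn : 4 ≤ n) (i j : Fin n) (a b : Fin 2) :
    (cycleGraph n □ (⊤ : SimpleGraph (Fin 2))).dist (i, a) (j, b)
      = cd i j + (if a = b then 0 else 1) := by
  refine le_antisymm ?_ ?_
  · obtain ⟨p, hp⟩ := exists_cycle_walk hn (cd i j) i j rfl
    have q : ∃ q : (⊤ : SimpleGraph (Fin 2)).Walk a b,
        q.length = (if a = b then 0 else 1) := by
      by_cases hab : a = b
      · subst hab; exact ⟨SimpleGraph.Walk.nil, by simp⟩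
      · exact ⟨SimpleGraph.Walk.cons (top_adj a b |>.mpr hab) SimpleGraph.Walk.nil,
          by simp [hab]⟩
    obtain ⟨q, hq⟩ := q
    refine le_trans (SimpleGraph.dist_le ((SimpleGraph.Walk.boxProdLeft
      (⊤ : SimpleGraph (Fin 2)) a p).append
      (SimpleGraph.Walk.boxProdRight (cycleGraph n) j q))) ?_
    rw [SimpleGraph.Walk.length_append]
    exact (congrArg₂ (· + ·) ((SimpleGraph.Walk.length_map _ p).trans hp)
      ((SimpleGraph.Walk.length_map _ q).trans hq)).le
  · obtain ⟨p, hp⟩ := ((prism_conn hn) (i, a) (j, b)).exists_walk_length_eq_dist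
    have := pd_le hn p
    simpa [hp] using this

def par (k : Fin n) (hn : 0 < n) : Fin 2 := ⟨k.val % 2, by omega⟩

lemma ind_eq (hn : 0 < n) (a : Fin 2) (k : Fin n) :
    (if a = par k hn then (0:ℕ) else 1) = if a.val = k.val % 2 then 0 else 1 := by
  refine if_congr ?_ rfl rfl
  rw [Fin.ext_iff]; rfl

lemma ind_eq2 (a : Fin 2) (K : ℕ) :
    (if a.val = K % 2 then (0:ℕ) else 1) = (a.val + K) % 2 := by
  have := a.isLt
  split_ifs <;> omega

lemma conclude (hn0 : 0 < n) (i j : Fin n) (a b : Fin 2) (K : ℕ) (hK : K < n)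
    (h : min ((i.val - K) + (K - i.val)) (n - ((i.val - K) + (K - i.val)))
          + (a.val + K) % 2
       = min ((j.val - K) + (K - j.val)) (n - ((j.val - K) + (K - j.val)))
          + (b.val + K) % 2) :
    ∃ k : Fin n, cd i k + (if a = par k hn0 then 0 else 1)
      = cd j k + (if b = par k hn0 then 0 else 1) := by
  refine ⟨⟨K, hK⟩, ?_⟩
  rw [cd_val2 hn0, cd_val2 hn0, ind_eq, ind_eq]
  simp only [Fin.val_mk, ind_eq2]
  exact h

set_option maxHeartbeats 2000000 in
lemma key (hn : 4 ≤ n) (h4 : n % 4 = 0) (hn0 : 0 < n) (i j : Fin n) (a b : Fin 2)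
    (ha : a ≠ par i hn0) (hb : b ≠ par j hn0) :
    ∃ k : Fin n, cd i k + (if a = par k hn0 then 0 else 1)
      = cd j k + (if b = par k hn0 then 0 else 1) := by
  have hi := i.isLt; have hj := j.isLt
  have ha2 := a.isLt; have hb2 := b.isLt
  have ha' : ¬ (a.val = i.val % 2) := by
    simpa [Fin.ext_iff, par] using ha
  have hb' : ¬ (b.val = j.val % 2) := by
    simpa [Fin.ext_iff, par] using hb
  rcases le_or_gt i.val j.val with hij | hij
  · by_cases hd3 : (j.val - i.val) % 4 = 3
    · rcases le_or_gt ((n - (j.val - i.val) - 1)/2) i.val with ht | ht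
      · exact conclude hn0 i j a b (i.val - (n - (j.val - i.val) - 1)/2)
          (by omega) (by omega)
      · exact conclude hn0 i j a b (i.val + n - (n - (j.val - i.val) - 1)/2)
          (by omega) (by omega)
    · exact conclude hn0 i j a b (i.val + (j.val - i.val)/2) (by omega) (by omega)
  · by_cases hd3 : (j.val + n - i.val) % 4 = 3
    · exact conclude hn0 i j a b (i.val - (i.val - j.val - 1)/2) (by omega) (by omega)
    · rcases Nat.lt_or_ge (i.val + (j.val + n - i.val)/2) n with hw | hw
      · exact conclude hn0 i j a b (i.val + (j.val + n - i.val)/2) (by omega) (by omega)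
      · exact conclude hn0 i j a b (i.val + (j.val + n - i.val)/2 - n)
          (by omega) (by omega)

end EqdimPrism

open EqdimPrism

theorem stmt_12 (n : ℕ) (hn : 4 ≤ n) (h4 : n % 4 = 0) :
    eqdim (cycleGraph n □ (⊤ : SimpleGraph (Fin 2))) = n := by
  classical
  have hn0 : 0 < n := by omega
  -- the upper-bound distance-equalizer set
  let D : Finset (Fin n × Fin 2) := Finset.image (fun i => (i, par i hn0)) Finset.univ
  have hmem : ∀ p : Fin n × Fin 2, p ∈ D ↔ p.2 = par p.1 hn0 := by
    intro p
    simp only [D, Finset.mem_image, Finset.mem_univ, true_and]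
    constructor
    · rintro ⟨i, rfl⟩; rfl
    · intro h; exact ⟨p.1, by rw [← Prod.mk.eta (p := p), ← h]⟩
  have hDcard : D.card = n := by
    rw [Finset.card_image_of_injective _ (fun x y hxy => (Prod.mk.injEq _ _ _ _ ▸ hxy).1)]
    simp
  have hD : IsDistEqSet (cycleGraph n □ (⊤ : SimpleGraph (Fin 2))) (D : Set (Fin n × Fin 2)) := by
    rintro ⟨x1, x2⟩ hx ⟨y1, y2⟩ hy
    rw [Finset.mem_coe] at hx hy
    have hx2 : x2 ≠ par x1 hn0 := fun h => hx ((hmem (x1, x2)).mpr h)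
    have hy2 : y2 ≠ par y1 hn0 := fun h => hy ((hmem (y1, y2)).mpr h)
    obtain ⟨k, hk⟩ := key hn h4 hn0 x1 y1 x2 y2 hx2 hy2
    refine ⟨(k, par k hn0), Finset.mem_coe.mpr ((hmem (k, par k hn0)).mpr rfl), ?_⟩
    rw [prism_dist hn, prism_dist hn]
    exact hk
  -- lower bound
  have hlow : ∀ D' : Finset (Fin n × Fin 2),
      IsDistEqSet (cycleGraph n □ (⊤ : SimpleGraph (Fin 2))) (D' : Set (Fin n × Fin 2)) →
      n ≤ D'.card := by
    intro D' hD'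
    have hcol : ∀ i : Fin n, (i, (0 : Fin 2)) ∈ D' ∨ (i, (1 : Fin 2)) ∈ D' := by
      intro i
      by_contra hcon
      push_neg at hcon
      obtain ⟨w, hw, heq⟩ := hD' (i, 0) (by simpa using hcon.1) (i, 1) (by simpa using hcon.2)
      obtain ⟨w1, w2⟩ := w
      rw [prism_dist hn, prism_dist hn] at heq
      fin_cases w2 <;> simp at heq
    have hfmem : ∀ i : Fin n,
        (if (i, (0 : Fin 2)) ∈ D' then (i, (0 : Fin 2)) else (i, (1 : Fin 2))) ∈ D' := by
      intro i
      rcases hcol i with h | h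
      · simp [h]
      · by_cases h0 : (i, (0 : Fin 2)) ∈ D' <;> simp [h0, h]
    have hfst : ∀ i : Fin n,
        (if (i, (0 : Fin 2)) ∈ D' then (i, (0 : Fin 2)) else (i, (1 : Fin 2))).1 = i := by
      intro i; split <;> rfl
    calc n = (Finset.univ : Finset (Fin n)).card := by simp
    _ ≤ D'.card := by
        refine Finset.card_le_card_of_injOn
          (fun i => if (i, (0 : Fin 2)) ∈ D' then (i, (0 : Fin 2)) else (i, (1 : Fin 2)))
          (fun i _ => hfmem i) ?_
        intro x _ y _ h
        have := congrArg Prod.fst h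
        rwa [hfst, hfst] at this
  -- conclude
  refine le_antisymm (Nat.sInf_le ⟨D, hD, hDcard⟩) (le_csInf ⟨n, D, hD, hDcard⟩ ?_)
  rintro k ⟨D', hD', rfl⟩
  exact hlow D' hD'
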